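/- Let 0 < ε < 1, let p ≥ 1 and 1 ≤ k ≤ |F| be integers, and let X ⊆ F with |X| = k. Suppose that for every subset X' ⊆ F with |X'| = k, |X \ X'| ≤ p and |X' \ X| ≤ p, it holds that ∑_{v ∈ D} d(v, X') > (1 − ε/k) · ∑_{v ∈ D} d(v, X). Then ∑_{v ∈ D} d(v, X) ≤ (1/(1−ε)) · (3 + 2/p) · OPT, where OPT = min_{Y ⊆ F, |Y| = k} ∑_{v ∈ D} d(v, Y). -/

import Mathlib

noncomputable def distToSet {M : Type*} [MetricSpace M] (v : M) (X : Finset M) : ℝ :=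
  sInf ((fun u => dist v u) '' (X : Set M))

lemma distToSet_le {M : Type*} [MetricSpace M] (v u : M) (X : Finset M) (hu : u ∈ X) :
    distToSet v X ≤ dist v u := by
  apply csInf_le
  · exact ⟨0, by rintro r ⟨w, hw, rfl⟩; exact dist_nonneg⟩
  · exact ⟨u, hu, rfl⟩

lemma exists_nearest {M : Type*} [MetricSpace M] (v : M) {X : Finset M} (hX : X.Nonempty) :
    ∃ u ∈ X, dist v u = distToSet v X := by
  obtain ⟨u, hu, hmin⟩ := X.exists_min_image (fun u => dist v u) hX
  refine ⟨u, hu, le_antisymm ?_ (distToSet_le v u X hu)⟩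
  refine le_csInf ?_ ?_
  · exact ⟨dist v u, ⟨u, by simpa using hu, rfl⟩⟩
  · rintro r ⟨w, hw, rfl⟩; exact hmin w (by simpa using hw)

lemma distToSet_mono {M : Type*} [MetricSpace M] (v : M) {X X' : Finset M}
    (h : X ⊆ X') (hX : X.Nonempty) : distToSet v X' ≤ distToSet v X := by
  obtain ⟨u, hu, hd⟩ := exists_nearest v hX
  rw [← hd]; exact distToSet_le v u X' (h hu)

lemma choose_disjoint {M : Type*} [DecidableEq M] (T : Finset M) :
    ∀ (S : Finset M) (c : M → ℕ), (∑ t ∈ T, c t ≤ S.card) →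
    ∃ C : M → Finset M, (∀ t ∈ T, C t ⊆ S ∧ (C t).card = c t) ∧
      (∀ t₁ ∈ T, ∀ t₂ ∈ T, t₁ ≠ t₂ → Disjoint (C t₁) (C t₂)) := by
  classical
  induction T using Finset.induction_on with
  | empty => intro S c _; exact ⟨fun _ => ∅, by simp, by simp⟩
  | @insert a T ha ih =>
    intro S c hsum
    rw [Finset.sum_insert ha] at hsum
    obtain ⟨Ca, hCaS, hCacard⟩ := Finset.exists_subset_card_eq (le_trans (Nat.le_add_right _ _) hsum)
    have hS' : ∑ t ∈ T, c t ≤ (S \ Ca).card := by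
      rw [Finset.card_sdiff_of_subset hCaS, hCacard]; omega
    obtain ⟨C₀, hC₀, hC₀disj⟩ := ih (S \ Ca) c hS'
    refine ⟨fun t => if t = a then Ca else C₀ t, ?_, ?_⟩
    · intro t ht
      rcases Finset.mem_insert.mp ht with rfl | ht
      · simp [hCaS, hCacard]
      · have hne : t ≠ a := fun h => ha (h ▸ ht)
        simp only [if_neg hne]
        exact ⟨(hC₀ t ht).1.trans Finset.sdiff_subset, (hC₀ t ht).2⟩
    · intro t₁ ht₁ t₂ ht₂ hne
      have key : ∀ t ∈ T, Disjoint Ca (C₀ t) := fun t ht =>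
        Finset.disjoint_left.mpr fun x hx hx2 =>
          (Finset.mem_sdiff.mp ((hC₀ t ht).1 hx2)).2 hx
      rcases Finset.mem_insert.mp ht₁ with rfl | ht₁ <;>
        rcases Finset.mem_insert.mp ht₂ with rfl | ht₂
      · exact absurd rfl hne
      · simp only [if_pos rfl, if_neg (show t₂ ≠ t₁ from fun h => ha (h ▸ ht₂))]
        exact key t₂ ht₂
      · have ht₁' : t₁ ∈ T := by
          rcases Finset.mem_insert.mp ht₁ with h | h
          · exact absurd h hne
          · exact h
        simp only [if_pos rfl, if_neg hne]
        exact (key t₁ ht₁').symm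
      · simp only [if_neg (show t₁ ≠ a from fun h => ha (h ▸ ht₁)),
            if_neg (show t₂ ≠ a from fun h => ha (h ▸ ht₂))]
        exact hC₀disj t₁ ht₁ t₂ ht₂ hne

set_option maxHeartbeats 1000000 in
theorem discrete_kmedian_local_search_approx
    {M : Type*} [MetricSpace M] [DecidableEq M] (D F : Finset M) (ε : ℝ) (p k : ℕ)
    (hε0 : 0 < ε) (hε1 : ε < 1) (hp : 1 ≤ p) (hk : 1 ≤ k) (hkF : k ≤ F.card)
    (X : Finset M) (hXF : X ⊆ F) (hXcard : X.card = k)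
    (hlocal : ∀ X' : Finset M, X' ⊆ F → X'.card = k →
        (X \ X').card ≤ p → (X' \ X).card ≤ p →
        (1 - ε / (k : ℝ)) * ∑ v ∈ D, distToSet v X < ∑ v ∈ D, distToSet v X') :
    ∑ v ∈ D, distToSet v X ≤
      (1 / (1 - ε)) * (3 + 2 / (p : ℝ)) *
        (F.powersetCard k).inf' (Finset.powersetCard_nonempty.mpr hkF)
          (fun Y => ∑ v ∈ D, distToSet v Y) := by
  classical
  obtain ⟨Y, hYmem, hYopt⟩ := Finset.exists_mem_eq_inf'
    (Finset.powersetCard_nonempty.mpr hkF) (fun Y => ∑ v ∈ D, distToSet v Y)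
  rw [hYopt]
  rw [Finset.mem_powersetCard] at hYmem
  obtain ⟨hYF, hYcard⟩ := hYmem
  have hkR : (0:ℝ) < (k:ℝ) := by exact_mod_cast Nat.lt_of_lt_of_le Nat.zero_lt_one hk
  have hpR : (0:ℝ) < (p:ℝ) := by exact_mod_cast Nat.lt_of_lt_of_le Nat.zero_lt_one hp
  have hXne : X.Nonempty := Finset.card_pos.mp (by rw [hXcard]; exact hk)
  have hYne : Y.Nonempty := Finset.card_pos.mp (by rw [hYcard]; exact hk)
  choose s hsX hsd using fun v : M => exists_nearest v hXne
  choose o hoY hod using fun v : M => exists_nearest v hYne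
  choose φ hφX hφd using fun y : M => exists_nearest y hXne
  set SX := ∑ v ∈ D, distToSet v X with hSXdef
  set SY := ∑ v ∈ D, distToSet v Y with hSYdef
  have hSXnn : 0 ≤ SX := Finset.sum_nonneg fun v _ => by
    rw [← hsd v]; exact dist_nonneg
  have hSYnn : 0 ≤ SY := Finset.sum_nonneg fun v _ => by
    rw [← hod v]; exact dist_nonneg
  have hSYeq : SY = ∑ v ∈ D, dist v (o v) := by
    rw [hSYdef]; exact Finset.sum_congr rfl fun v _ => (hod v).symm
  -- ============ the key swap inequality ============
  have keySwap : ∀ A B : Finset M, A ⊆ X → B ⊆ Y → B.Nonempty → B.card ≤ A.card →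
      A.card ≤ p → (∀ v ∈ D, o v ∉ B → φ (o v) ∉ A) →
      -(ε / (k:ℝ)) * SX < ∑ v ∈ D, ((if o v ∈ B then dist v (o v) - distToSet v X else 0)
        + (if s v ∈ A then 2 * dist v (o v) else 0)) := by
    intro A B hAX hBY hBne hBA hAp hcond
    set X0 := (X \ A) ∪ B with hX0def
    have hX0ne : X0.Nonempty := hBne.mono Finset.subset_union_right
    have hX0F : X0 ⊆ F := Finset.union_subset (Finset.sdiff_subset.trans hXF) (hBY.trans hYF)
    have hsdiffA : (X \ A).card + A.card = X.card := Finset.card_sdiff_add_card_eq_card hAX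
    have hX0card : X0.card ≤ k := by
      have h := Finset.card_union_le (X \ A) B
      rw [← hX0def] at h
      omega
    have hpad : k - X0.card ≤ (X \ X0).card := by
      have h1 : X.card - X0.card ≤ (X \ X0).card := Finset.le_card_sdiff X0 X
      omega
    obtain ⟨P, hPsub, hPcard⟩ := Finset.exists_subset_card_eq hpad
    set X' := X0 ∪ P with hX'def
    have hX'F : X' ⊆ F := Finset.union_subset hX0F
      ((hPsub.trans Finset.sdiff_subset).trans hXF)
    have hdisj : Disjoint X0 P := by
      rw [Finset.disjoint_right]
      intro x hx
      exact (Finset.mem_sdiff.mp (hPsub hx)).2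
    have hX'card : X'.card = k := by
      rw [hX'def, Finset.card_union_of_disjoint hdisj, hPcard]
      omega
    have h1 : (X \ X').card ≤ p := by
      refine le_trans (Finset.card_le_card ?_) hAp
      intro x hx
      obtain ⟨hx1, hx2⟩ := Finset.mem_sdiff.mp hx
      by_contra hxA
      exact hx2 (Finset.mem_union_left _ (Finset.mem_union_left _
        (Finset.mem_sdiff.mpr ⟨hx1, hxA⟩)))
    have h2 : (X' \ X).card ≤ p := by
      refine le_trans (Finset.card_le_card (show X' \ X ⊆ B from ?_)) (le_trans hBA hAp)
      intro x hx
      obtain ⟨hx1, hx2⟩ := Finset.mem_sdiff.mp hx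
      rcases Finset.mem_union.mp hx1 with h | h
      · rcases Finset.mem_union.mp h with h' | h'
        · exact absurd (Finset.mem_sdiff.mp h').1 hx2
        · exact h'
      · exact absurd (Finset.mem_sdiff.mp (hPsub h)).1 hx2
    have hloc := hlocal X' hX'F hX'card h1 h2
    have hmono : ∑ v ∈ D, distToSet v X' ≤ ∑ v ∈ D, distToSet v X0 :=
      Finset.sum_le_sum fun v _ => distToSet_mono v Finset.subset_union_left hX0ne
    have hbound : ∑ v ∈ D, distToSet v X0 ≤ SX + ∑ v ∈ D,
        ((if o v ∈ B then dist v (o v) - distToSet v X else 0)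
          + (if s v ∈ A then 2 * dist v (o v) else 0)) := by
      rw [hSXdef, ← Finset.sum_add_distrib]
      refine Finset.sum_le_sum fun v hv => ?_
      by_cases hoB : o v ∈ B
      · have hle : distToSet v X0 ≤ dist v (o v) :=
          distToSet_le v (o v) X0 (Finset.mem_union_right _ hoB)
        rw [if_pos hoB]
        have h2O : (0:ℝ) ≤ (if s v ∈ A then 2 * dist v (o v) else 0) := by
          split
          · positivity
          · exact le_refl 0
        linarith
      · by_cases hsA : s v ∈ A
        · have hφmem : φ (o v) ∈ X0 := Finset.mem_union_left _
            (Finset.mem_sdiff.mpr ⟨hφX (o v), hcond v hv hoB⟩)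
          have t1 : distToSet v X0 ≤ dist v (φ (o v)) := distToSet_le v _ X0 hφmem
          have t2 : dist v (φ (o v)) ≤ dist v (o v) + dist (o v) (φ (o v)) :=
            dist_triangle v (o v) (φ (o v))
          have t3 : dist (o v) (φ (o v)) ≤ dist (o v) (s v) := by
            rw [hφd (o v)]
            exact distToSet_le (o v) (s v) X (hsX v)
          have t4 : dist (o v) (s v) ≤ dist (o v) v + dist v (s v) :=
            dist_triangle (o v) v (s v)
          have t5 : dist v (s v) = distToSet v X := hsd v
          have t6 : dist (o v) v = dist v (o v) := dist_comm _ _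
          rw [if_neg hoB, if_pos hsA]
          linarith
        · rw [if_neg hoB, if_neg hsA]
          have hle : distToSet v X0 ≤ dist v (s v) := distToSet_le v (s v) X0
            (Finset.mem_union_left _ (Finset.mem_sdiff.mpr ⟨hsX v, hsA⟩))
          rw [hsd v] at hle
          linarith
    have hcomb : (1 - ε / (k:ℝ)) * SX < SX + ∑ v ∈ D,
        ((if o v ∈ B then dist v (o v) - distToSet v X else 0)
          + (if s v ∈ A then 2 * dist v (o v) else 0)) :=
      lt_of_lt_of_le hloc (le_trans hmono hbound)
    nlinarith [hcomb]
  -- ============ the combinatorial construction ============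
  set m : M → ℕ := fun x => (Y.filter (fun y => φ y = x)).card with hmdef
  set X₁ := X.filter (fun x => 0 < m x) with hX₁def
  set X₀ := X \ X₁ with hX₀def
  have hmsum : ∑ x ∈ X, m x = k := by
    rw [← hYcard]
    exact (Finset.card_eq_sum_card_fiberwise (fun y _ => hφX y)).symm
  have hbusy : ∀ y ∈ Y, φ y ∈ X₁ := by
    intro y hy
    rw [hX₁def, Finset.mem_filter]
    refine ⟨hφX y, Finset.card_pos.mpr ⟨y, Finset.mem_filter.mpr ⟨hy, rfl⟩⟩⟩
  have hm1 : ∀ x ∈ X₁, 1 ≤ m x := fun x hx => (Finset.mem_filter.mp hx).2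
  have hsum1 : ∑ x ∈ X₁, m x = k := by
    rw [hX₁def, Finset.sum_filter_of_ne (fun x _ h => Nat.pos_of_ne_zero h), hmsum]
  have hX₁sub : X₁ ⊆ X := Finset.filter_subset _ _
  have hX₀card : X₀.card = k - X₁.card := by
    rw [hX₀def, Finset.card_sdiff_of_subset hX₁sub, hXcard]
  have hX₁card : X₁.card ≤ k := by rw [← hXcard]; exact Finset.card_le_card hX₁sub
  have hle : ∑ x ∈ X₁, (m x - 1) ≤ X₀.card := by
    have h : ∑ x ∈ X₁, (m x - 1) + X₁.card = k := by
      rw [← hsum1, Finset.card_eq_sum_ones X₁, ← Finset.sum_add_distrib]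
      exact Finset.sum_congr rfl fun x hx => Nat.sub_add_cancel (hm1 x hx)
    omega
  obtain ⟨C, hC, hCdisj⟩ := choose_disjoint X₁ X₀ (fun x => m x - 1) hle
  set A : M → Finset M := fun x => insert x (C x) with hAdef
  set B : M → Finset M := fun x => Y.filter (fun y => φ y = x) with hBdef
  have hX₀X₁ : ∀ x ∈ X₀, x ∉ X₁ := fun x hx => (Finset.mem_sdiff.mp hx).2
  have hAcard : ∀ x ∈ X₁, (A x).card = m x := by
    intro x hx
    have hxC : x ∉ C x := fun h => hX₀X₁ x ((hC x hx).1 h) hx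
    rw [hAdef]
    simp only []
    rw [Finset.card_insert_of_notMem hxC, (hC x hx).2]
    exact Nat.sub_add_cancel (hm1 x hx)
  have hAsubX : ∀ x ∈ X₁, A x ⊆ X := by
    intro x hx
    rw [hAdef]
    exact Finset.insert_subset (hX₁sub hx) (((hC x hx).1).trans Finset.sdiff_subset)
  have hAdisj : ∀ x₁ ∈ X₁, ∀ x₂ ∈ X₁, x₁ ≠ x₂ → Disjoint (A x₁) (A x₂) := by
    intro x₁ hx₁ x₂ hx₂ hne
    rw [hAdef, Finset.disjoint_left]
    intro a ha ha2
    rcases Finset.mem_insert.mp ha with rfl | ha <;>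
      rcases Finset.mem_insert.mp ha2 with h2 | h2
    · exact hne h2
    · exact hX₀X₁ a ((hC x₂ hx₂).1 h2) hx₁
    · exact hX₀X₁ a ((hC x₁ hx₁).1 ha) (h2 ▸ hx₂)
    · exact Finset.disjoint_left.mp (hCdisj x₁ hx₁ x₂ hx₂ hne) ha h2
  have hBcard : ∀ x, (B x).card = m x := fun x => rfl
  have hBsubY : ∀ x, B x ⊆ Y := fun x => Finset.filter_subset _ _
  have hmemB : ∀ (v : M) (x : M), (o v ∈ B x) ↔ (φ (o v) = x) := by
    intro v x
    rw [hBdef, Finset.mem_filter]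
    exact ⟨fun h => h.2, fun h => ⟨hoY v, h⟩⟩
  -- per-block inequality
  have hper : ∀ x ∈ X₁, -(ε / (k:ℝ)) * SX * (m x : ℝ) <
      (∑ v ∈ D, (if o v ∈ B x then dist v (o v) - distToSet v X else 0))
      + (1 + 1/(p:ℝ)) * ∑ v ∈ D, (if s v ∈ A x then 2 * dist v (o v) else 0) := by
    intro x hx
    have hxC := hC x hx
    have hBne : (B x).Nonempty := Finset.card_pos.mp (by rw [hBcard]; exact hm1 x hx)
    have hm1x : 1 ≤ m x := hm1 x hx
    have hm1R : (1:ℝ) ≤ ((m x : ℕ) : ℝ) := by exact_mod_cast hm1x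
    have hR2nn : 0 ≤ ∑ v ∈ D, (if s v ∈ A x then 2 * dist v (o v) else 0) :=
      Finset.sum_nonneg fun v _ => by
        split
        · positivity
        · exact le_refl 0
    have htnn : 0 ≤ ε / (k:ℝ) * SX := mul_nonneg (div_nonneg hε0.le hkR.le) hSXnn
    rcases le_or_gt (m x) p with hmp | hmp
    · -- whole-block swap
      have hcond : ∀ v ∈ D, o v ∉ B x → φ (o v) ∉ A x := by
        intro v hv hoB hmem
        simp only [hAdef, Finset.mem_insert] at hmem
        rcases hmem with h | h
        · exact hoB ((hmemB v x).mpr h)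
        · exact hX₀X₁ _ (hxC.1 h) (hbusy (o v) (hoY v))
      have hks := keySwap (A x) (B x) (hAsubX x hx) (hBsubY x) hBne
        (by rw [hBcard, hAcard x hx]) (by rw [hAcard x hx]; exact hmp) hcond
      rw [Finset.sum_add_distrib] at hks
      nlinarith [hks, mul_nonneg (sub_nonneg.mpr hm1R) htnn,
        mul_nonneg (le_of_lt (show (0:ℝ) < 1/(p:ℝ) by positivity)) hR2nn]
    · -- singleton swaps
      have hCne : (C x).Nonempty := Finset.card_pos.mp (by rw [hxC.2]; omega)
      have hstep : ∀ a ∈ C x, ∀ b ∈ B x,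
          -(ε/(k:ℝ)) * SX < (∑ v ∈ D, (if o v = b then dist v (o v) - distToSet v X else 0))
            + (∑ v ∈ D, (if s v = a then 2 * dist v (o v) else 0)) := by
        intro a ha b hb
        have haX0 : a ∈ X₀ := hxC.1 ha
        have haX : ({a} : Finset M) ⊆ X :=
          Finset.singleton_subset_iff.mpr (Finset.mem_sdiff.mp haX0).1
        have hbY : ({b} : Finset M) ⊆ Y := Finset.singleton_subset_iff.mpr (hBsubY x hb)
        have hcond : ∀ v ∈ D, o v ∉ ({b}:Finset M) → φ (o v) ∉ ({a}:Finset M) := by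
          intro v hv _
          rw [Finset.mem_singleton]
          intro h
          exact hX₀X₁ a haX0 (h ▸ hbusy (o v) (hoY v))
        have hks := keySwap {a} {b} haX hbY (Finset.singleton_nonempty b)
          (by simp) (by simpa using hp) hcond
        rw [Finset.sum_add_distrib] at hks
        simpa [Finset.mem_singleton] using hks
      have hfb : ∑ b ∈ B x, (∑ v ∈ D, (if o v = b then dist v (o v) - distToSet v X else 0))
          = ∑ v ∈ D, (if o v ∈ B x then dist v (o v) - distToSet v X else 0) := by
        rw [Finset.sum_comm]
        refine Finset.sum_congr rfl fun v _ => ?_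
        exact Finset.sum_ite_eq (B x) (o v) _
      have houter : ∀ a ∈ C x, ((m x : ℕ) : ℝ) * (-(ε/(k:ℝ)) * SX) <
          (∑ v ∈ D, (if o v ∈ B x then dist v (o v) - distToSet v X else 0))
          + ((m x : ℕ) : ℝ) * (∑ v ∈ D, (if s v = a then 2 * dist v (o v) else 0)) := by
        intro a ha
        have h := Finset.sum_lt_sum_of_nonempty hBne (fun b hb => hstep a ha b hb)
        rw [Finset.sum_const, Finset.sum_add_distrib, Finset.sum_const, hfb, hBcard,
          nsmul_eq_mul, nsmul_eq_mul] at h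
        exact h
      have hga : ∑ a ∈ C x, (∑ v ∈ D, (if s v = a then 2 * dist v (o v) else 0))
          = ∑ v ∈ D, (if s v ∈ C x then 2 * dist v (o v) else 0) := by
        rw [Finset.sum_comm]
        refine Finset.sum_congr rfl fun v _ => ?_
        exact Finset.sum_ite_eq (C x) (s v) _
      have h2 := Finset.sum_lt_sum_of_nonempty hCne houter
      rw [Finset.sum_const, Finset.sum_add_distrib, Finset.sum_const, ← Finset.mul_sum,
        hga, hxC.2, nsmul_eq_mul, nsmul_eq_mul] at h2
      have hcast : ((m x - 1 : ℕ) : ℝ) = ((m x : ℕ) : ℝ) - 1 := by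
        push_cast [Nat.cast_sub hm1x]
        ring
      rw [hcast] at h2
      -- h2 : (m-1) * (m * t) < (m-1) * R1 + m * R2'
      set R1 := ∑ v ∈ D, (if o v ∈ B x then dist v (o v) - distToSet v X else 0) with hR1d
      set R2' := ∑ v ∈ D, (if s v ∈ C x then 2 * dist v (o v) else 0) with hR2'd
      set R2 := ∑ v ∈ D, (if s v ∈ A x then 2 * dist v (o v) else 0) with hR2d
      have hR2'nn : 0 ≤ R2' := Finset.sum_nonneg fun v _ => by
        split
        · positivity
        · exact le_refl 0
      have hR2'le : R2' ≤ R2 := by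
        refine Finset.sum_le_sum fun v _ => ?_
        by_cases hsv : s v ∈ C x
        · rw [if_pos hsv, if_pos (by simp only [hAdef, Finset.mem_insert]; exact Or.inr hsv)]
        · rw [if_neg hsv]
          split
          · positivity
          · exact le_refl 0
      have hm1p : (p:ℝ) ≤ ((m x : ℕ) : ℝ) - 1 := by
        have : (p:ℕ) + 1 ≤ m x := hmp
        have h' : ((p:ℕ):ℝ) + 1 ≤ ((m x : ℕ) : ℝ) := by exact_mod_cast this
        linarith
      have hm1pos : (0:ℝ) < ((m x : ℕ) : ℝ) - 1 := lt_of_lt_of_le hpR hm1p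
      have hcoef2 : ((m x : ℕ) : ℝ) ≤ (((m x : ℕ) : ℝ) - 1) * (1 + 1/(p:ℝ)) := by
        have hd : (1:ℝ) ≤ (((m x : ℕ) : ℝ) - 1)/(p:ℝ) := (one_le_div hpR).mpr hm1p
        have e : (((m x : ℕ) : ℝ) - 1) * (1 + 1/(p:ℝ))
            = (((m x : ℕ) : ℝ) - 1) + (((m x : ℕ) : ℝ) - 1)/(p:ℝ) := by ring
        linarith
      have hcnn : (0:ℝ) ≤ (((m x : ℕ) : ℝ) - 1) * (1 + 1/(p:ℝ)) := by positivity
      have hstep2 : (((m x : ℕ) : ℝ) - 1) * (((m x : ℕ) : ℝ) * (-(ε/(k:ℝ)) * SX))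
          < (((m x : ℕ) : ℝ) - 1) * (R1 + (1 + 1/(p:ℝ)) * R2) := by
        calc (((m x : ℕ) : ℝ) - 1) * (((m x : ℕ) : ℝ) * (-(ε/(k:ℝ)) * SX))
            < (((m x : ℕ) : ℝ) - 1) * R1 + ((m x : ℕ) : ℝ) * R2' := h2
          _ ≤ (((m x : ℕ) : ℝ) - 1) * R1 + ((((m x : ℕ) : ℝ) - 1) * (1 + 1/(p:ℝ))) * R2' :=
              add_le_add_right (mul_le_mul_of_nonneg_right hcoef2 hR2'nn) _
          _ ≤ (((m x : ℕ) : ℝ) - 1) * R1 + ((((m x : ℕ) : ℝ) - 1) * (1 + 1/(p:ℝ))) * R2 :=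
              add_le_add_right (mul_le_mul_of_nonneg_left hR2'le hcnn) _
          _ = (((m x : ℕ) : ℝ) - 1) * (R1 + (1 + 1/(p:ℝ)) * R2) := by ring
      have hfinal := (mul_lt_mul_iff_right₀ hm1pos).mp hstep2
      linarith [hfinal]
  -- aggregation
  have hX₁ne : X₁.Nonempty := by
    rw [Finset.nonempty_iff_ne_empty]
    intro h
    rw [h, Finset.sum_empty] at hsum1
    omega
  have hagg := Finset.sum_lt_sum_of_nonempty hX₁ne hper
  have hLHS : ∑ x ∈ X₁, -(ε / (k:ℝ)) * SX * (m x : ℝ) = -ε * SX := by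
    rw [← Finset.mul_sum, ← Nat.cast_sum, hsum1]
    field_simp
  have hR1 : ∑ x ∈ X₁, (∑ v ∈ D, (if o v ∈ B x then dist v (o v) - distToSet v X else 0))
      = SY - SX := by
    rw [Finset.sum_comm]
    have : ∀ v ∈ D, (∑ x ∈ X₁, (if o v ∈ B x then dist v (o v) - distToSet v X else 0))
        = dist v (o v) - distToSet v X := by
      intro v _
      have : ∀ x ∈ X₁, (if o v ∈ B x then dist v (o v) - distToSet v X else 0)
          = (if φ (o v) = x then dist v (o v) - distToSet v X else 0) := by
        intro x _
        congr 1
        exact propext (hmemB v x)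
      rw [Finset.sum_congr rfl this, Finset.sum_ite_eq, if_pos (hbusy (o v) (hoY v))]
    rw [Finset.sum_congr rfl this, Finset.sum_sub_distrib, ← hSYeq, hSXdef]
  have hR2 : ∑ x ∈ X₁, (∑ v ∈ D, (if s v ∈ A x then 2 * dist v (o v) else 0)) ≤ 2 * SY := by
    rw [Finset.sum_comm]
    rw [hSYeq, Finset.mul_sum]
    refine Finset.sum_le_sum fun v _ => ?_
    rw [← Finset.sum_filter]
    have hcard1 : (X₁.filter (fun x => s v ∈ A x)).card ≤ 1 := by
      rw [Finset.card_le_one]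
      intro x₁ h₁ x₂ h₂
      obtain ⟨hx₁, hs₁⟩ := Finset.mem_filter.mp h₁
      obtain ⟨hx₂, hs₂⟩ := Finset.mem_filter.mp h₂
      by_contra hne
      exact Finset.disjoint_left.mp (hAdisj x₁ hx₁ x₂ hx₂ hne) hs₁ hs₂
    rw [Finset.sum_const, nsmul_eq_mul]
    have h2O : (0:ℝ) ≤ 2 * dist v (o v) := by positivity
    calc ((X₁.filter (fun x => s v ∈ A x)).card : ℝ) * (2 * dist v (o v))
        ≤ 1 * (2 * dist v (o v)) := by
          apply mul_le_mul_of_nonneg_right _ h2O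
          exact_mod_cast hcard1
      _ = 2 * dist v (o v) := one_mul _
  -- final arithmetic
  rw [hLHS, Finset.sum_add_distrib, ← Finset.mul_sum, hR1] at hagg
  have hcoef : (0:ℝ) < 1 + 1/(p:ℝ) := by positivity
  have hfin : -ε * SX < SY - SX + (1 + 1/(p:ℝ)) * (2 * SY) := by
    have := mul_le_mul_of_nonneg_left hR2 (le_of_lt hcoef)
    linarith
  have h1ε : (0:ℝ) < 1 - ε := by linarith
  have hkey : SX * (1 - ε) < (3 + 2/(p:ℝ)) * SY := by
    have e1 : (1 + 1/(p:ℝ)) * (2 * SY) = 2 * SY + 2/(p:ℝ) * SY := by ring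
    have e2 : (3 + 2/(p:ℝ)) * SY = 3 * SY + 2/(p:ℝ) * SY := by ring
    have e3 : SX * (1 - ε) = SX - ε * SX := by ring
    linarith
  calc SX ≤ (3 + 2/(p:ℝ)) * SY / (1 - ε) := le_of_lt ((lt_div_iff₀ h1ε).mpr hkey)
    _ = 1 / (1 - ε) * (3 + 2 / (p:ℝ)) * SY := by ring
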